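/- Let f be an elimination rule, s = {s_A} a selection rule, δ : ℕ → ℝ, and suppose there is a polynomial p such that for every α > 0 and every n ≥ p(1/α) the following holds: for every voter i ∈ [n] and every α-coarse belief φ there exists a nonempty subset A ⊆ C such that (i) for every P_i ∈ 𝒫, the elimination rule f(P⃗_{-i},P_i) outputs A with probability at least 1 − δ(n), over the randomness of P⃗_{-i} ∼ φ^{n−1} and of f, and (ii) the voting rule s_A is strategy-proof w.r.t. the single belief φ|_A. Then the voting rule v defined by v(P⃗) = s(P⃗|_{f(P⃗)}) is large-scale 2δ-strategy-proof w.r.t. coarse i.i.d. beliefs with rate p. -/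

import Mathlib

open Finset

section VotingPrelims

variable (C : Type) [Fintype C] [DecidableEq C]

/-- A preference ordering over the subset `A` of candidates: a duplicate-free list
enumerating exactly the members of `A`, where earlier entries are more preferred. -/
def PrefOn (A : Finset C) : Type :=
  {l : List C // l.Nodup ∧ l.toFinset = A}

/-- A (full) preference ordering on the whole candidate set. -/
abbrev Pref : Type := PrefOn C Finset.univ

variable {C}

noncomputable instance instFintypePrefOn (A : Finset C) : Fintype (PrefOn C A) :=
  Fintype.subtype A.toList.permutations.toFinset (by
    intro l
    rw [List.mem_toFinset, List.mem_permutations]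
    constructor
    · intro h
      exact ⟨h.nodup_iff.mpr A.nodup_toList,
        by rw [List.toFinset_eq_of_perm _ _ h, Finset.toList_toFinset]⟩
    · rintro ⟨h1, h2⟩
      exact List.perm_of_nodup_nodup_toFinset_eq h1 A.nodup_toList
        (by rw [h2, Finset.toList_toFinset]))

instance instDecidableEqPrefOn (A : Finset C) : DecidableEq (PrefOn C A) := fun P Q =>
  decidable_of_iff (P.1 = Q.1) Subtype.ext_iff.symm

/-- `P.pref x y` means that `x` is strictly preferred to `y` in `P`. -/
def PrefOn.pref {A : Finset C} (P : PrefOn C A) (x y : C) : Prop :=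
  P.1.idxOf x < P.1.idxOf y

theorem Pref.mem_list (P : Pref C) (z : C) : z ∈ P.1 := by
  rw [← List.mem_toFinset, P.2.2]; exact Finset.mem_univ z

/-- The top (most preferred) candidate of a full preference ordering. -/
noncomputable def Pref.top [Nonempty C] (P : Pref C) : C :=
  P.1.head?.getD (Classical.arbitrary C)

/-- The most preferred candidate of `S` according to the full preference `P`. -/
noncomputable def Pref.topOn [Nonempty C] (P : Pref C) (S : Finset C) : C :=
  (P.1.filter (fun z => decide (z ∈ S))).head?.getD (Classical.arbitrary C)

/-- The number of voters whose top choice is `x`. -/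
noncomputable def topCount [Nonempty C] {n : ℕ} (P : Fin n → Pref C) (x : C) : ℕ :=
  (Finset.univ.filter fun i => (P i).top = x).card

/-- The number of voters whose most preferred candidate among `S` is `x`. -/
noncomputable def countTop [Nonempty C] {n : ℕ} (P : Fin n → Pref C) (S : Finset C)
    (x : C) : ℕ :=
  (Finset.univ.filter fun i => (P i).topOn S = x).card

/-- The restriction of a full preference ordering to the subset `A`. -/
def Pref.restrictTo (P : Pref C) (A : Finset C) : PrefOn C A :=
  ⟨P.1.filter (fun z => decide (z ∈ A)), P.2.1.filter _, by
    ext z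
    simp only [List.mem_toFinset, List.mem_filter, decide_eq_true_eq]
    exact ⟨fun h => h.2, fun h => ⟨Pref.mem_list P z, h⟩⟩⟩

/-- `d` is a probability distribution on the candidates. -/
def IsDist (d : C → ℝ) : Prop :=
  (∀ x, 0 ≤ d x) ∧ ∑ x, d x = 1

/-- `d` is a probability distribution on the candidates, supported on `A`. -/
def IsDistOn (A : Finset C) (d : C → ℝ) : Prop :=
  IsDist d ∧ ∀ x ∉ A, d x = 0

/-- `v` is a (randomized) voting rule: it maps every profile to a distribution. -/
def IsVotingRule {A : Finset C} {n : ℕ} (v : (Fin n → PrefOn C A) → C → ℝ) : Prop :=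
  ∀ P, IsDist (v P)

/-- `φ` is a belief, i.e. a probability distribution over preference orderings. -/
def IsBelief {A : Finset C} (φ : PrefOn C A → ℝ) : Prop :=
  (∀ P, 0 ≤ φ P) ∧ ∑ P, φ P = 1

/-- Anonymity: permuting the voters does not change the outcome distribution. -/
def Anonymous {A : Finset C} {n : ℕ} (v : (Fin n → PrefOn C A) → C → ℝ) : Prop :=
  ∀ σ : Equiv.Perm (Fin n), ∀ P : Fin n → PrefOn C A, v (fun i => P (σ i)) = v P

/-- Utilities take values in `[0,1]`. -/
def Utility01 (u : C → ℝ) : Prop := ∀ x, 0 ≤ u x ∧ u x ≤ 1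

/-- The utility function `u` is consistent with the preference ordering `P` on `A`. -/
def ConsistentOn (A : Finset C) (u : C → ℝ) (P : PrefOn C A) : Prop :=
  ∀ x ∈ A, ∀ y ∈ A, (u y < u x ↔ P.pref x y)

/-- The profile in which voter `i` reports `Pi` and the remaining voters report `R`. -/
def combine {A : Finset C} {n : ℕ} (i : Fin n) (Pi : PrefOn C A)
    (R : {j : Fin n // j ≠ i} → PrefOn C A) : Fin n → PrefOn C A :=
  fun j => if h : j = i then Pi else R ⟨j, h⟩

/-- The expected utility of voter `i` when reporting `Pi`, where the remaining `n-1`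
voters' preferences are drawn i.i.d. from the belief `φ`. -/
noncomputable def EU {A : Finset C} {n : ℕ} (v : (Fin n → PrefOn C A) → C → ℝ)
    (u : C → ℝ) (φ : PrefOn C A → ℝ) (i : Fin n) (Pi : PrefOn C A) : ℝ :=
  ∑ R : {j : Fin n // j ≠ i} → PrefOn C A,
    (∏ j, φ (R j)) * ∑ x, v (combine i Pi R) x * u x

/-- Strategy-proofness with respect to a set `Φ` of (i.i.d.) beliefs. -/
def SPwrt {A : Finset C} {n : ℕ} (v : (Fin n → PrefOn C A) → C → ℝ)
    (Φ : Set (PrefOn C A → ℝ)) : Prop :=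
  ∀ i : Fin n, ∀ Pi Pi' : PrefOn C A, ∀ φ ∈ Φ, IsBelief φ →
    ∀ u : C → ℝ, Utility01 u → ConsistentOn A u Pi →
      EU v u φ i Pi' ≤ EU v u φ i Pi

/-- Weak strategy-proofness: strategy-proofness w.r.t. all (i.i.d.) beliefs. -/
def WeaklySP {n : ℕ} (v : (Fin n → Pref C) → C → ℝ) : Prop :=
  SPwrt v Set.univ

/-- `ε`-super-weak unanimity. -/
def SuperWeakUnanimity [Nonempty C] {n : ℕ} (v : (Fin n → Pref C) → C → ℝ) (ε : ℝ) : Prop :=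
  ∀ x : C, ∃ P : Fin n → Pref C, (∀ i, (P i).top = x) ∧ 1 - ε ≤ v P x

/-- `ε`-strong unanimity. -/
def StrongUnanimity [Nonempty C] {n : ℕ} (v : (Fin n → Pref C) → C → ℝ) (ε : ℝ) : Prop :=
  ∀ x : C, ∀ P : Fin n → Pref C, (∀ i, (P i).top = x) → 1 - ε ≤ v P x

/-- `ε`-Pareto efficiency. -/
def ParetoEff {n : ℕ} (v : (Fin n → Pref C) → C → ℝ) (ε : ℝ) : Prop :=
  ∀ x y : C, ∀ P : Fin n → Pref C, (∀ i, (P i).pref x y) → v P y ≤ ε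

/-- An `α`-coarse belief: all probabilities are integer multiples of some `β ≥ α`. -/
def CoarseBelief {A : Finset C} (α : ℝ) (φ : PrefOn C A → ℝ) : Prop :=
  ∃ β : ℝ, α ≤ β ∧ ∀ P, ∃ k : ℤ, φ P = k * β

/-- An `α`-coarse utility function: any two utilities are equal or at least `α` apart. -/
def CoarseUtility (α : ℝ) (u : C → ℝ) : Prop :=
  ∀ x y : C, u x = u y ∨ α ≤ |u x - u y|

/-- Large-scale `ε`-strategy-proofness w.r.t. coarse i.i.d. beliefs, with rate `p`. -/
def LargeScaleSP (v : (n : ℕ) → (Fin n → Pref C) → C → ℝ) (ε : ℕ → ℝ) (p : ℝ → ℝ) : Prop :=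
  ∀ α : ℝ, 0 < α → ∀ n : ℕ, p (1 / α) ≤ (n : ℝ) →
    ∀ i : Fin n, ∀ Pi Pi' : Pref C, ∀ φ : Pref C → ℝ, IsBelief φ → CoarseBelief α φ →
      ∀ u : C → ℝ, Utility01 u → CoarseUtility α u → ConsistentOn Finset.univ u Pi →
        EU (v n) u φ i Pi' - ε n ≤ EU (v n) u φ i Pi

/-- The restriction of a belief to the candidate subset `A`. -/
noncomputable def beliefRestrict (φ : Pref C → ℝ) (A : Finset C) : PrefOn C A → ℝ :=
  fun Q => ∑ P : Pref C, if P.restrictTo A = Q then φ P else 0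

/-- The punishing voting rule: choose a uniform voter, then her `j`-th ranked candidate
with probability proportional to `m - j`. -/
noncomputable def vPunish (n : ℕ) (P : Fin n → Pref C) (x : C) : ℝ :=
  (1 / (n : ℝ)) * ∑ i : Fin n,
    (((Fintype.card C : ℝ) - ((P i).1.idxOf x + 1)) /
      (∑ ℓ ∈ Finset.range (Fintype.card C), ((Fintype.card C : ℝ) - ((ℓ : ℝ) + 1))))

end VotingPrelims

section MorePrelims

variable {C : Type} [Fintype C] [DecidableEq C]

/-- `x` is directly above `y` in the preference ordering `P`. -/
def DirectlyAbove (P : Pref C) (x y : C) : Prop :=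
  P.pref x y ∧ ∀ z : C, z ≠ x → z ≠ y → (P.pref z x ↔ P.pref z y)

/-- The preference obtained from `P` by exchanging the positions of `x` and `y`. -/
def Pref.swapC (P : Pref C) (x y : C) : Pref C :=
  ⟨P.1.map (Equiv.swap x y), P.2.1.map (Equiv.injective _), by
    apply Finset.eq_univ_iff_forall.mpr
    intro z
    rw [List.mem_toFinset, List.mem_map]
    exact ⟨Equiv.swap x y z, Pref.mem_list P _, Equiv.swap_apply_self x y z⟩⟩

/-- Pairwise responsiveness. -/
def PairwiseResponsive {n : ℕ} (v : (Fin n → Pref C) → C → ℝ) : Prop :=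
  ∀ P : Fin n → Pref C, ∀ i : Fin n, ∀ x y : C, DirectlyAbove (P i) x y →
    ∀ z : C, z ≠ x → z ≠ y →
      v (Function.update P i ((P i).swapC x y)) z = v P z

/-- Pairwise isolation. -/
def PairwiseIsolated {n : ℕ} (v : (Fin n → Pref C) → C → ℝ) : Prop :=
  ∀ x y : C, ∀ i : Fin n, ∀ P P' : Fin n → Pref C,
    DirectlyAbove (P i) x y → P' i = P i →
    (∀ j : Fin n, (P j).pref x y ↔ (P' j).pref x y) →
      v (Function.update P' i ((P' i).swapC x y)) y - v P' y
        = v (Function.update P i ((P i).swapC x y)) y - v P y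

/-- The ordering that puts `x` on top, with the rest ordered as in `a`. -/
def prefTopList (a : Pref C) (x : C) : Pref C :=
  ⟨x :: a.1.erase x, by
    rw [List.nodup_cons]
    exact ⟨a.2.1.not_mem_erase, a.2.1.erase x⟩, by
    apply Finset.eq_univ_iff_forall.mpr
    intro z
    rw [List.mem_toFinset, List.mem_cons]
    by_cases hz : z = x
    · exact Or.inl hz
    · exact Or.inr ((List.mem_erase_of_ne hz).mpr (Pref.mem_list a z))⟩

/-- The ordering `a` with `x` moved to the bottom. -/
def prefBotList (a : Pref C) (x : C) : Pref C :=
  ⟨a.1.erase x ++ [x], by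
    rw [List.nodup_append]
    exact ⟨a.2.1.erase x, List.nodup_singleton x,
      fun z hz b hb heq => absurd hz (by
        rw [heq, List.mem_singleton.mp hb]; exact a.2.1.not_mem_erase)⟩, by
    apply Finset.eq_univ_iff_forall.mpr
    intro z
    rw [List.mem_toFinset, List.mem_append, List.mem_singleton]
    by_cases hz : z = x
    · exact Or.inr hz
    · exact Or.inl ((List.mem_erase_of_ne hz).mpr (Pref.mem_list a z))⟩

/-- The profile `P⃗^{x,j}`: the first `j` voters rank `x` first followed by the remaining
candidates in the order `a`; the remaining voters use `a` with `x` moved to the bottom. -/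
def profileXJ (a : Pref C) (x : C) (j : ℕ) (n : ℕ) : Fin n → Pref C :=
  fun i => if (i : ℕ) < j then prefTopList a x else prefBotList a x

/-- `v'(x,j)`: the selection probability of `x` on the profile `P⃗^{x,j}`. -/
def vPrime {n : ℕ} (v : (Fin n → Pref C) → C → ℝ) (a : Pref C) (x : C) (j : ℕ) : ℝ :=
  v (profileXJ a x j n) x

/-- One round of repeated-plurality elimination with margin `T`: keep exactly the
candidates of `S` whose top-choice count is within `T` of the highest count. -/
noncomputable def plStep [Nonempty C] {n : ℕ} (P : Fin n → Pref C) (T : ℝ) (S : Finset C) :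
    Finset C :=
  S.filter (fun x => ((S.sup (countTop P S) : ℕ) : ℝ) ≤ (countTop P S x : ℝ) + T)

/-- The set of remaining candidates after repeated-plurality elimination. -/
noncomputable def plFinal [Nonempty C] {n : ℕ} (P : Fin n → Pref C) (T : ℝ) : Finset C :=
  (fun S => plStep P T S)^[Fintype.card C] Finset.univ

/-- The plurality winner among `S`, with ties broken by `tb`. -/
noncomputable def pluralityWinner [Nonempty C] {n : ℕ} (tb : Finset C → C)
    (P : Fin n → Pref C) (S : Finset C) : C :=
  tb (S.filter (fun x => countTop P S x = S.sup (countTop P S)))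

/-- Repeated Plurality Elimination + Plurality Selection. -/
noncomputable def vPl [Nonempty C] (δ : ℝ) (tb : Finset C → C) (n : ℕ)
    (P : Fin n → Pref C) (x : C) : ℝ :=
  if x = pluralityWinner tb P (plFinal P ((n : ℝ) ^ ((1 : ℝ) / 2 + δ))) then 1 else 0

/-- One round of approximate instant-runoff elimination with margin `T`: eliminate the
candidates of `S` whose top-choice count is within `T` of the least count, unless this
would eliminate everyone. -/
noncomputable def irvStep [Nonempty C] {n : ℕ} (P : Fin n → Pref C) (T : ℝ) (S : Finset C) :
    Finset C :=
  if h : S.Nonempty then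
    let E := S.filter (fun x =>
      (countTop P S x : ℝ) ≤ (((S.image (countTop P S)).min' (h.image _) : ℕ) : ℝ) + T)
    if E = S then S else S \ E
  else S

/-- The set of remaining candidates after approximate instant-runoff elimination. -/
noncomputable def irvFinal [Nonempty C] {n : ℕ} (P : Fin n → Pref C) (T : ℝ) : Finset C :=
  (fun S => irvStep P T S)^[Fintype.card C] Finset.univ

/-- Approximate Instant-Runoff Voting. -/
noncomputable def vIrv [Nonempty C] (δ : ℝ) (tb : Finset C → C) (n : ℕ)
    (P : Fin n → Pref C) (x : C) : ℝ :=
  if x = pluralityWinner tb P (irvFinal P ((n : ℝ) ^ ((1 : ℝ) / 2 + δ))) then 1 else 0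

/-- The position (0-indexed rank) of candidate `x` in the ordering `P`. -/
def Pref.rank (P : Pref C) (x : C) : Fin (Fintype.card C) :=
  ⟨P.1.idxOf x, by
    have hx : x ∈ P.1 := Pref.mem_list P x
    have hlen : P.1.length = Fintype.card C := by
      rw [← List.toFinset_card_of_nodup P.2.1, P.2.2, Finset.card_univ]
    rw [← hlen]
    exact List.idxOf_lt_length_iff.mpr hx⟩

/-- The score of candidate `x` under the positional scoring rule with points vector `pv`. -/
def scoreOf (pv : Fin (Fintype.card C) → ℕ) {n : ℕ} (P : Fin n → Pref C) (x : C) : ℕ :=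
  ∑ i : Fin n, pv ((P i).rank x)

/-- Scoring Rule Elimination + Input-Independent Selection. -/
noncomputable def vScore (δ : ℝ) (pv : Fin (Fintype.card C) → ℕ) (sel : Finset C → C → ℝ)
    (n : ℕ) (P : Fin n → Pref C) (x : C) : ℝ :=
  sel (Finset.univ.filter (fun y =>
    ((Finset.univ.sup (scoreOf pv P) : ℕ) : ℝ) ≤ (scoreOf pv P y : ℝ) + (n : ℝ) ^ ((1 : ℝ) / 2 + δ))) x

end MorePrelims


section Stmt9Helpers

private lemma indexOf_filter_lt_iff {α : Type*} [DecidableEq α] (p : α → Bool)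
    (x y : α) (hpx : p x = true) (hpy : p y = true) (hxy : x ≠ y) (l : List α) :
    ((l.filter p).idxOf x < (l.filter p).idxOf y ↔ l.idxOf x < l.idxOf y) := by
  induction l with
  | nil => simp
  | cons a t ih =>
    by_cases hax : a = x
    · subst hax
      rw [List.filter_cons_of_pos hpx, List.idxOf_cons_self, List.idxOf_cons_self,
        List.idxOf_cons_ne _ hxy, List.idxOf_cons_ne _ hxy]
      simp
    · by_cases hay : a = y
      · subst hay
        rw [List.filter_cons_of_pos hpy, List.idxOf_cons_self, List.idxOf_cons_self,
          List.idxOf_cons_ne _ (Ne.symm hxy), List.idxOf_cons_ne _ (Ne.symm hxy)]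
        simp
      · by_cases hpa : p a = true
        · rw [List.filter_cons_of_pos hpa, List.idxOf_cons_ne _ hax,
            List.idxOf_cons_ne _ hay, List.idxOf_cons_ne _ hax, List.idxOf_cons_ne _ hay,
            Nat.succ_lt_succ_iff, Nat.succ_lt_succ_iff]
          exact ih
        · rw [List.filter_cons_of_neg hpa, List.idxOf_cons_ne _ hax,
            List.idxOf_cons_ne _ hay, Nat.succ_lt_succ_iff]
          exact ih

private lemma restrictTo_pref_iff {C : Type} [Fintype C] [DecidableEq C] (P : Pref C)
    (A : Finset C) {x y : C} (hx : x ∈ A) (hy : y ∈ A) :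
    ((P.restrictTo A).pref x y ↔ P.pref x y) := by
  by_cases hxy : x = y
  · subst hxy
    simp [PrefOn.pref]
  · exact indexOf_filter_lt_iff (fun z => decide (z ∈ A)) x y (by simp [hx]) (by simp [hy])
      hxy P.1

private lemma prod_sum_fn {I κ : Type} [Fintype I] [DecidableEq I] [Fintype κ]
    (h : I → κ → ℝ) :
    ∏ j : I, ∑ c : κ, h j c = ∑ R : I → κ, ∏ j : I, h j (R j) := by
  rw [Finset.prod_univ_sum, Fintype.piFinset_univ]

end Stmt9Helpers

/-- The general framework: an elimination rule that a coarse-believing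
voter believes she cannot influence, followed by a selection rule that is
strategy-proof w.r.t. the restricted belief, yields a voting rule that is large-scale
`2δ`-strategy-proof w.r.t. coarse i.i.d. beliefs, with rate `p`. -/
theorem stmt9 {C : Type} [Fintype C] [DecidableEq C]
    (f : (n : ℕ) → (Fin n → Pref C) → Finset C → ℝ)
    (hf : ∀ (n : ℕ) (P : Fin n → Pref C),
      (∀ A : Finset C, 0 ≤ f n P A) ∧ (∑ A : Finset C, f n P A = 1) ∧ f n P ∅ = 0)
    (s : (A : Finset C) → (n : ℕ) → (Fin n → PrefOn C A) → C → ℝ)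
    (hs : ∀ (A : Finset C), A.Nonempty → ∀ (n : ℕ) (P : Fin n → PrefOn C A),
      IsDistOn A (s A n P))
    (δ : ℕ → ℝ) (p : Polynomial ℝ)
    (hyp : ∀ α : ℝ, 0 < α → ∀ n : ℕ, p.eval (1 / α) ≤ (n : ℝ) →
      ∀ i : Fin n, ∀ φ : Pref C → ℝ, IsBelief φ → CoarseBelief α φ →
        ∃ A : Finset C, A.Nonempty ∧
          (∀ Pi : Pref C,
            1 - δ n ≤ ∑ R : {j : Fin n // j ≠ i} → Pref C,
              (∏ j, φ (R j)) * f n (combine i Pi R) A) ∧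
          SPwrt (s A n) {beliefRestrict φ A}) :
    LargeScaleSP
      (fun n P x => ∑ A : Finset C, f n P A * s A n (fun i => (P i).restrictTo A) x)
      (fun n => 2 * δ n) (fun x => p.eval x) := by
  classical
  intro α hα n hn i Pi Pi' φ hφ hφc u hu _hcu hcons
  obtain ⟨A, hAne, hAelim, hAsp⟩ := hyp α hα n hn i φ hφ hφc
  -- the restricted belief is a belief
  have hψnn : ∀ Q : PrefOn C A, 0 ≤ beliefRestrict φ A Q := by
    intro Q
    refine Finset.sum_nonneg fun P _ => ?_
    split
    · exact hφ.1 P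
    · exact le_rfl
  have hψ1 : ∑ Q : PrefOn C A, beliefRestrict φ A Q = 1 := by
    unfold beliefRestrict
    rw [Finset.sum_comm]
    simp_rw [Finset.sum_ite_eq]
    simpa using hφ.2
  have hψbelief : IsBelief (beliefRestrict φ A) := ⟨hψnn, hψ1⟩
  -- the pushforward identity for i.i.d. product beliefs
  have hprod_ite : ∀ (R : {j : Fin n // j ≠ i} → Pref C) (Q : {j : Fin n // j ≠ i} → PrefOn C A),
      (∏ j, if (R j).restrictTo A = Q j then φ (R j) else 0)
        = if (fun j => (R j).restrictTo A) = Q then ∏ j, φ (R j) else 0 := by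
    intro R Q
    by_cases h : (fun j => (R j).restrictTo A) = Q
    · rw [if_pos h]
      refine Finset.prod_congr rfl fun j _ => ?_
      rw [← h]
      simp
    · rw [if_neg h]
      have hex : ∃ j, (R j).restrictTo A ≠ Q j := by
        by_contra hc
        push_neg at hc
        exact h (funext hc)
      obtain ⟨j, hj⟩ := hex
      exact Finset.prod_eq_zero (Finset.mem_univ j) (if_neg hj)
  have hpush : ∀ F : ({j : Fin n // j ≠ i} → PrefOn C A) → ℝ,
      (∑ R : {j : Fin n // j ≠ i} → Pref C,
          (∏ j, φ (R j)) * F (fun j => (R j).restrictTo A))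
        = ∑ Q : {j : Fin n // j ≠ i} → PrefOn C A,
            (∏ j, beliefRestrict φ A (Q j)) * F Q := by
    intro F
    have h1 : ∀ Q : {j : Fin n // j ≠ i} → PrefOn C A,
        (∏ j, beliefRestrict φ A (Q j))
          = ∑ R : {j : Fin n // j ≠ i} → Pref C,
              ∏ j, if (R j).restrictTo A = Q j then φ (R j) else 0 := by
      intro Q
      rw [← prod_sum_fn (fun j P => if P.restrictTo A = Q j then φ P else 0)]
      rfl
    calc (∑ R : {j : Fin n // j ≠ i} → Pref C,
            (∏ j, φ (R j)) * F (fun j => (R j).restrictTo A))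
        = ∑ R : {j : Fin n // j ≠ i} → Pref C,
            ∑ Q : {j : Fin n // j ≠ i} → PrefOn C A,
              (if (fun j => (R j).restrictTo A) = Q then (∏ j, φ (R j)) * F Q else 0) := by
          refine Finset.sum_congr rfl fun R _ => ?_
          rw [Finset.sum_ite_eq]
          simp
      _ = ∑ Q : {j : Fin n // j ≠ i} → PrefOn C A,
            ∑ R : {j : Fin n // j ≠ i} → Pref C,
              (if (fun j => (R j).restrictTo A) = Q then (∏ j, φ (R j)) * F Q else 0) :=
          Finset.sum_comm
      _ = ∑ Q : {j : Fin n // j ≠ i} → PrefOn C A,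
            (∏ j, beliefRestrict φ A (Q j)) * F Q := by
          refine Finset.sum_congr rfl fun Q _ => ?_
          rw [h1, Finset.sum_mul]
          refine Finset.sum_congr rfl fun R _ => ?_
          rw [hprod_ite, ite_mul, zero_mul]
  -- total weight 1
  have hw1 : (∑ R : {j : Fin n // j ≠ i} → Pref C, ∏ j, φ (R j)) = 1 := by
    rw [← prod_sum_fn (fun _ P => φ P)]
    simp [hφ.2]
  have hwnn : ∀ R : {j : Fin n // j ≠ i} → Pref C, 0 ≤ ∏ j, φ (R j) :=
    fun R => Finset.prod_nonneg fun j _ => hφ.1 _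
  -- combine commutes with restriction
  have hcomb : ∀ (Pc : Pref C) (R : {j : Fin n // j ≠ i} → Pref C),
      (fun j => Pref.restrictTo (combine i Pc R j) A)
        = combine i (Pc.restrictTo A) (fun k => (R k).restrictTo A) := by
    intro Pc R
    funext j
    unfold combine
    by_cases h : j = i <;> simp [h]
  -- the restricted expected utility
  have hT : ∀ Pc : Pref C,
      (∑ R : {j : Fin n // j ≠ i} → Pref C, (∏ j, φ (R j)) *
          ∑ x, s A n (fun j => Pref.restrictTo (combine i Pc R j) A) x * u x)
        = EU (s A n) u (beliefRestrict φ A) i (Pc.restrictTo A) := by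
    intro Pc
    have hp := hpush (fun Q => ∑ x, s A n (combine i (Pc.restrictTo A) Q) x * u x)
    simp_rw [hcomb Pc]
    exact hp
  -- strategy-proofness of the selection rule
  have hSP : EU (s A n) u (beliefRestrict φ A) i (Pi'.restrictTo A)
      ≤ EU (s A n) u (beliefRestrict φ A) i (Pi.restrictTo A) := by
    refine hAsp i (Pi.restrictTo A) (Pi'.restrictTo A) (beliefRestrict φ A) rfl hψbelief
      u hu ?_
    intro x hx y hy
    exact (hcons x (Finset.mem_univ x) y (Finset.mem_univ y)).trans
      (restrictTo_pref_iff Pi A hx hy).symm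
  -- bounds on the conditional selection utility
  have hgb : ∀ (Pf : Fin n → Pref C) (B : Finset C), B.Nonempty →
      0 ≤ (∑ x, s B n (fun j => (Pf j).restrictTo B) x * u x) ∧
      (∑ x, s B n (fun j => (Pf j).restrictTo B) x * u x) ≤ 1 := by
    intro Pf B hB
    obtain ⟨⟨hnn, hsum⟩, -⟩ := hs B hB n (fun j => (Pf j).restrictTo B)
    constructor
    · exact Finset.sum_nonneg fun x _ => mul_nonneg (hnn x) (hu x).1
    · calc (∑ x, s B n (fun j => (Pf j).restrictTo B) x * u x)
          ≤ ∑ x, s B n (fun j => (Pf j).restrictTo B) x * 1 :=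
            Finset.sum_le_sum fun x _ => mul_le_mul_of_nonneg_left (hu x).2 (hnn x)
        _ = 1 := by simp [hsum]
  -- rearranging the expected utility of the composed rule
  have hrearr : ∀ Pf : Fin n → Pref C,
      (∑ x, (∑ B : Finset C, f n Pf B * s B n (fun j => (Pf j).restrictTo B) x) * u x)
        = ∑ B : Finset C, f n Pf B *
            (∑ x, s B n (fun j => (Pf j).restrictTo B) x * u x) := by
    intro Pf
    simp_rw [Finset.sum_mul, mul_assoc]
    rw [Finset.sum_comm]
    simp_rw [Finset.mul_sum]
  -- pointwise bounds on the composed utility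
  have hbound : ∀ Pf : Fin n → Pref C,
      ((∑ x, s A n (fun j => (Pf j).restrictTo A) x * u x) - (1 - f n Pf A)
        ≤ ∑ B : Finset C, f n Pf B *
            (∑ x, s B n (fun j => (Pf j).restrictTo B) x * u x))
      ∧ ((∑ B : Finset C, f n Pf B *
            (∑ x, s B n (fun j => (Pf j).restrictTo B) x * u x))
        ≤ (∑ x, s A n (fun j => (Pf j).restrictTo A) x * u x) + (1 - f n Pf A)) := by
    intro Pf
    obtain ⟨hf0, hf1, hfe⟩ := hf n Pf
    have hterm : ∀ B : Finset C,
        0 ≤ f n Pf B * (∑ x, s B n (fun j => (Pf j).restrictTo B) x * u x)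
        ∧ f n Pf B * (∑ x, s B n (fun j => (Pf j).restrictTo B) x * u x) ≤ f n Pf B := by
      intro B
      rcases B.eq_empty_or_nonempty with hB | hB
      · subst hB
        rw [hfe]
        simp
      · obtain ⟨h0, h1⟩ := hgb Pf B hB
        exact ⟨mul_nonneg (hf0 B) h0, by nlinarith [hf0 B]⟩
    have hfA1 : f n Pf A ≤ 1 := by
      rw [← hf1]
      exact Finset.single_le_sum (fun B _ => hf0 B) (Finset.mem_univ A)
    have hgA := hgb Pf A hAne
    have hrest : (∑ B ∈ Finset.univ.erase A, f n Pf B) = 1 - f n Pf A := by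
      have h5 := Finset.sum_erase_add Finset.univ (f n Pf) (Finset.mem_univ A)
      rw [hf1] at h5
      linarith
    constructor
    · have h1 : f n Pf A * (∑ x, s A n (fun j => (Pf j).restrictTo A) x * u x)
          ≤ ∑ B : Finset C, f n Pf B *
              (∑ x, s B n (fun j => (Pf j).restrictTo B) x * u x) :=
        Finset.single_le_sum (fun B _ => (hterm B).1) (Finset.mem_univ A)
      nlinarith [hgA.1, hgA.2, hf0 A, hfA1]
    · rw [← Finset.sum_erase_add Finset.univ _ (Finset.mem_univ A)]
      have h3 : (∑ B ∈ Finset.univ.erase A, f n Pf B *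
            (∑ x, s B n (fun j => (Pf j).restrictTo B) x * u x))
          ≤ ∑ B ∈ Finset.univ.erase A, f n Pf B :=
        Finset.sum_le_sum fun B _ => (hterm B).2
      have h4 : f n Pf A * (∑ x, s A n (fun j => (Pf j).restrictTo A) x * u x)
          ≤ ∑ x, s A n (fun j => (Pf j).restrictTo A) x * u x := by
        nlinarith [hgA.1, hgA.2, hf0 A, hfA1]
      linarith
  -- expected-utility bounds relating the composed rule to the selection rule
  have hEUbound : ∀ Pc : Pref C,
      (EU (s A n) u (beliefRestrict φ A) i (Pc.restrictTo A)) - δ n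
        ≤ EU (fun (P : Fin n → Pref C) x => ∑ B : Finset C, f n P B * s B n (fun j => (P j).restrictTo B) x)
            u φ i Pc
      ∧ EU (fun (P : Fin n → Pref C) x => ∑ B : Finset C, f n P B * s B n (fun j => (P j).restrictTo B) x)
            u φ i Pc
        ≤ (EU (s A n) u (beliefRestrict φ A) i (Pc.restrictTo A)) + δ n := by
    intro Pc
    have hE := hAelim Pc
    have hEU : EU (fun (P : Fin n → Pref C) x => ∑ B : Finset C, f n P B *
          s B n (fun j => (P j).restrictTo B) x) u φ i Pc
        = ∑ R : {j : Fin n // j ≠ i} → Pref C, (∏ j, φ (R j)) *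
            ∑ B : Finset C, f n (combine i Pc R) B *
              (∑ x, s B n (fun j => Pref.restrictTo (combine i Pc R j) B) x * u x) := by
      show (∑ R : {j : Fin n // j ≠ i} → Pref C, (∏ j, φ (R j)) *
          ∑ x, (∑ B : Finset C, f n (combine i Pc R) B *
            s B n (fun j => Pref.restrictTo (combine i Pc R j) B) x) * u x) = _
      exact Finset.sum_congr rfl fun R _ => by rw [hrearr (combine i Pc R)]
    have expand : (∑ R : {j : Fin n // j ≠ i} → Pref C, (∏ j, φ (R j)) *
          ((∑ x, s A n (fun j => Pref.restrictTo (combine i Pc R j) A) x * u x)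
            - (1 - f n (combine i Pc R) A)))
        = (∑ R : {j : Fin n // j ≠ i} → Pref C, (∏ j, φ (R j)) *
            ∑ x, s A n (fun j => Pref.restrictTo (combine i Pc R j) A) x * u x)
          - ((∑ R : {j : Fin n // j ≠ i} → Pref C, ∏ j, φ (R j))
            - (∑ R : {j : Fin n // j ≠ i} → Pref C,
                (∏ j, φ (R j)) * f n (combine i Pc R) A)) := by
      simp_rw [mul_sub, mul_one]
      rw [Finset.sum_sub_distrib, Finset.sum_sub_distrib]
    have expand2 : (∑ R : {j : Fin n // j ≠ i} → Pref C, (∏ j, φ (R j)) *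
          ((∑ x, s A n (fun j => Pref.restrictTo (combine i Pc R j) A) x * u x)
            + (1 - f n (combine i Pc R) A)))
        = (∑ R : {j : Fin n // j ≠ i} → Pref C, (∏ j, φ (R j)) *
            ∑ x, s A n (fun j => Pref.restrictTo (combine i Pc R j) A) x * u x)
          + ((∑ R : {j : Fin n // j ≠ i} → Pref C, ∏ j, φ (R j))
            - (∑ R : {j : Fin n // j ≠ i} → Pref C,
                (∏ j, φ (R j)) * f n (combine i Pc R) A)) := by
      simp_rw [mul_add, mul_sub, mul_one]
      rw [Finset.sum_add_distrib, Finset.sum_sub_distrib]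
    constructor
    · rw [hEU]
      have step : (∑ R : {j : Fin n // j ≠ i} → Pref C, (∏ j, φ (R j)) *
            ((∑ x, s A n (fun j => Pref.restrictTo (combine i Pc R j) A) x * u x)
              - (1 - f n (combine i Pc R) A)))
          ≤ ∑ R : {j : Fin n // j ≠ i} → Pref C, (∏ j, φ (R j)) *
              ∑ B : Finset C, f n (combine i Pc R) B *
                (∑ x, s B n (fun j => Pref.restrictTo (combine i Pc R j) B) x * u x) :=
        Finset.sum_le_sum fun R _ =>
          mul_le_mul_of_nonneg_left (hbound (combine i Pc R)).1 (hwnn R)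
      refine le_trans ?_ step
      rw [expand, hT Pc, hw1]
      linarith
    · rw [hEU]
      have step : (∑ R : {j : Fin n // j ≠ i} → Pref C, (∏ j, φ (R j)) *
              ∑ B : Finset C, f n (combine i Pc R) B *
                (∑ x, s B n (fun j => Pref.restrictTo (combine i Pc R j) B) x * u x))
          ≤ ∑ R : {j : Fin n // j ≠ i} → Pref C, (∏ j, φ (R j)) *
              ((∑ x, s A n (fun j => Pref.restrictTo (combine i Pc R j) A) x * u x)
                + (1 - f n (combine i Pc R) A)) :=
        Finset.sum_le_sum fun R _ =>
          mul_le_mul_of_nonneg_left (hbound (combine i Pc R)).2 (hwnn R)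
      refine le_trans step ?_
      rw [expand2, hT Pc, hw1]
      linarith
  have h1 := (hEUbound Pi).1
  have h2 := (hEUbound Pi').2
  show EU (fun (P : Fin n → Pref C) x => ∑ B : Finset C, f n P B * s B n (fun j => (P j).restrictTo B) x)
      u φ i Pi' - 2 * δ n
    ≤ EU (fun (P : Fin n → Pref C) x => ∑ B : Finset C, f n P B * s B n (fun j => (P j).restrictTo B) x)
      u φ i Pi
  linarith
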